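/- arXiv:1708.07610 — 3 statements merged into one kernel-verified Lean document; each statement's English description precedes it below -/
import Mathlib

section
/- Let k be a field of characteristic 0 and work in the polynomial ring k[t, x, y, z]. Then (y, z) ∩ (x, z) ∩ (x + y, z) ∩ ((x, y, z)^3 + (z^2)) = (x^2y + xy^2, xyz, x^2z, y^2z, z^2) as ideals of k[t, x, y, z]. (The left-hand side is the ideal of the (2,3)-cone configuration: three concurrent lines in the plane z = 0 through the point P = [1:0:0:0] together with the (2,3)-point with ideal (I_P)^3 + (I_H)^2, H the plane z = 0; so the limit scheme X_0 of the family X_λ equals this (2,3)-cone configuration.) -/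
open MvPolynomial

section Aux

variable (k : Type*) [Field k] [CharZero k]
set_option linter.unusedSectionVars false

/-- The substitution `z ↦ 0` (here `z = X 3`). -/
noncomputable def phi3 : MvPolynomial (Fin 4) k →ₐ[k] MvPolynomial (Fin 4) k :=
  aeval (fun i => if i = 3 then 0 else X i)

lemma phi3_X (i : Fin 4) :
    phi3 k (X i) = if i = 3 then 0 else X i := by
  simp [phi3]

variable {k}

lemma sub_phi3_mem (h : MvPolynomial (Fin 4) k) :
    h - phi3 k h ∈ Ideal.span {(X 3 : MvPolynomial (Fin 4) k)} := by
  induction h using MvPolynomial.induction_on with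
  | C a => simp [phi3]
  | add p q hp hq =>
      have e : p + q - phi3 k (p + q) = (p - phi3 k p) + (q - phi3 k q) := by
        rw [map_add]; ring
      rw [e]; exact add_mem hp hq
  | mul_X p i hp =>
      by_cases hi : i = 3
      · subst hi
        have e : p * X 3 - phi3 k (p * X 3) = p * X 3 := by
          rw [map_mul, phi3_X]; simp
        rw [e]
        exact Ideal.mem_span_singleton.2 ⟨p, mul_comm _ _⟩
      · have e : p * X i - phi3 k (p * X i) = (p - phi3 k p) * X i := by
          rw [map_mul, phi3_X, if_neg hi]; ring
        rw [e]
        exact Ideal.mul_mem_right _ _ hp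

lemma prime_X0 : Prime (X 0 : MvPolynomial (Fin 4) k) := by
  rw [← MulEquiv.prime_iff (MvPolynomial.finSuccEquiv k 3).toMulEquiv]
  have : (MvPolynomial.finSuccEquiv k 3) (X 0) = Polynomial.X := finSuccEquiv_X_zero
  rw [show ((MvPolynomial.finSuccEquiv k 3).toMulEquiv (X 0)) =
      (MvPolynomial.finSuccEquiv k 3) (X 0) from rfl, this]
  exact Polynomial.prime_X

lemma prime_Xi (i : Fin 4) : Prime (X i : MvPolynomial (Fin 4) k) := by
  have h := MulEquiv.prime_iff (renameEquiv k (Equiv.swap (0 : Fin 4) i)).toMulEquiv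
    (p := (X 0 : MvPolynomial (Fin 4) k))
  have e : (renameEquiv k (Equiv.swap (0 : Fin 4) i)) (X 0) = X i := by
    simp [Equiv.swap_apply_left]
  rw [show ((renameEquiv k (Equiv.swap (0 : Fin 4) i)).toMulEquiv (X 0)) =
      (renameEquiv k (Equiv.swap (0 : Fin 4) i)) (X 0) from rfl, e] at h
  exact h.mpr prime_X0

/-- The shear `y ↦ x + y`. -/
noncomputable def shear : MvPolynomial (Fin 4) k ≃ₐ[k] MvPolynomial (Fin 4) k :=
  AlgEquiv.ofAlgHom
    (aeval ![X 0, X 1, X 1 + X 2, X 3])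
    (aeval ![X 0, X 1, X 2 - X 1, X 3])
    (by apply MvPolynomial.algHom_ext; intro i; fin_cases i <;> simp)
    (by apply MvPolynomial.algHom_ext; intro i; fin_cases i <;> simp)

lemma prime_X1_add_X2 : Prime (X 1 + X 2 : MvPolynomial (Fin 4) k) := by
  have h := MulEquiv.prime_iff (shear (k := k)).toMulEquiv (p := (X 2 : MvPolynomial (Fin 4) k))
  have e : (shear (k := k)) (X 2) = X 1 + X 2 := by
    simp [shear]
  rw [show ((shear (k := k)).toMulEquiv (X 2)) = (shear (k := k)) (X 2) from rfl, e] at h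
  exact h.mpr (prime_Xi 2)

lemma not_X1_dvd_X2 : ¬ (X 1 : MvPolynomial (Fin 4) k) ∣ X 2 := by
  rintro ⟨c, hc⟩
  have := congrArg (eval ![0, 0, 1, 0]) hc
  simp at this

lemma not_add_dvd_X1 : ¬ (X 1 + X 2 : MvPolynomial (Fin 4) k) ∣ X 1 := by
  rintro ⟨c, hc⟩
  have := congrArg (eval ![0, 1, -1, 0]) hc
  simp at this

lemma not_add_dvd_X2 : ¬ (X 1 + X 2 : MvPolynomial (Fin 4) k) ∣ X 2 := by
  rintro ⟨c, hc⟩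
  have := congrArg (eval ![0, 1, -1, 0]) hc
  simp at this

end Aux

set_option maxHeartbeats 1000000 in
/-- In `k[t,x,y,z]` with `char k = 0`: the ideal of the `(2,3)`-cone configuration (three
concurrent lines in the plane `z = 0` through `P = [1:0:0:0]` together with the
`(2,3)`-point with ideal `(I_P)³ + (I_H)²`) equals `(x²y + xy², xyz, x²z, y²z, z²)`. -/
theorem ideal_of_two_three_cone_configuration (k : Type*) [Field k] [CharZero k] :
    let x : MvPolynomial (Fin 4) k := X 1
    let y : MvPolynomial (Fin 4) k := X 2
    let z : MvPolynomial (Fin 4) k := X 3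
    Ideal.span {y, z} ⊓ Ideal.span {x, z} ⊓ Ideal.span {x + y, z} ⊓
        ((Ideal.span {x, y, z}) ^ 3 + Ideal.span {z ^ 2}) =
      Ideal.span {x ^ 2 * y + x * y ^ 2, x * y * z, x ^ 2 * z, y ^ 2 * z, z ^ 2} := by
  intro x y z
  show Ideal.span {(X 2 : MvPolynomial (Fin 4) k), X 3} ⊓ Ideal.span {X 1, X 3} ⊓
      Ideal.span {X 1 + X 2, X 3} ⊓
      ((Ideal.span {X 1, X 2, X 3}) ^ 3 + Ideal.span {X 3 ^ 2}) =
    Ideal.span {X 1 ^ 2 * X 2 + X 1 * X 2 ^ 2, X 1 * X 2 * X 3, X 1 ^ 2 * X 3,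
      X 2 ^ 2 * X 3, X 3 ^ 2}
  clear_value x y z
  clear x y z
  set R := MvPolynomial (Fin 4) k with hR
  -- basic facts
  have hφx : phi3 k (X 1 : R) = X 1 := by rw [phi3_X]; simp
  have hφy : phi3 k (X 2 : R) = X 2 := by rw [phi3_X]; simp
  have hφz : phi3 k (X 3 : R) = 0 := by rw [phi3_X]; simp
  have hpow : (Ideal.span {(X 1 : R), X 2, X 3}) ^ 3 =
      Ideal.span {(X 1 : R), X 2, X 3} * Ideal.span {(X 1 : R), X 2, X 3} *
        Ideal.span {(X 1 : R), X 2, X 3} := by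
    rw [pow_succ, pow_succ, pow_one]
  have hxI : (X 1 : R) ∈ Ideal.span {(X 1 : R), X 2, X 3} := Ideal.subset_span (by simp)
  have hyI : (X 2 : R) ∈ Ideal.span {(X 1 : R), X 2, X 3} := Ideal.subset_span (by simp)
  have hzI : (X 3 : R) ∈ Ideal.span {(X 1 : R), X 2, X 3} := Ideal.subset_span (by simp)
  have h3 : ∀ a b c : R, a ∈ Ideal.span {(X 1 : R), X 2, X 3} →
      b ∈ Ideal.span {(X 1 : R), X 2, X 3} → c ∈ Ideal.span {(X 1 : R), X 2, X 3} →
      a * b * c ∈ (Ideal.span {(X 1 : R), X 2, X 3}) ^ 3 := by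
    intro a b c ha hb hc
    rw [hpow]
    exact Ideal.mul_mem_mul (Ideal.mul_mem_mul ha hb) hc
  have hgI3 : (X 1 ^ 2 * X 2 + X 1 * X 2 ^ 2 : R) ∈ (Ideal.span {(X 1 : R), X 2, X 3}) ^ 3 := by
    have e1 : (X 1 ^ 2 * X 2 : R) = X 1 * X 1 * X 2 := by ring
    have e2 : (X 1 * X 2 ^ 2 : R) = X 1 * X 2 * X 2 := by ring
    refine add_mem ?_ ?_
    · rw [e1]; exact h3 _ _ _ hxI hxI hyI
    · rw [e2]; exact h3 _ _ _ hxI hyI hyI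
  -- the easy inclusion ⊇
  have hsub : Ideal.span {(X 1 : R) ^ 2 * X 2 + X 1 * X 2 ^ 2, X 1 * X 2 * X 3, X 1 ^ 2 * X 3,
      X 2 ^ 2 * X 3, X 3 ^ 2} ≤
      Ideal.span {(X 2 : R), X 3} ⊓ Ideal.span {X 1, X 3} ⊓ Ideal.span {X 1 + X 2, X 3} ⊓
        ((Ideal.span {X 1, X 2, X 3}) ^ 3 + Ideal.span {X 3 ^ 2}) := by
    rw [Ideal.span_le]
    rintro p hp
    simp only [Set.mem_insert_iff, Set.mem_singleton_iff] at hp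
    rcases hp with rfl | rfl | rfl | rfl | rfl
    · refine ⟨⟨⟨?_, ?_⟩, ?_⟩, ?_⟩
      · exact Ideal.mem_span_pair.2 ⟨X 1 ^ 2 + X 1 * X 2, 0, by ring⟩
      · exact Ideal.mem_span_pair.2 ⟨X 1 * X 2 + X 2 ^ 2, 0, by ring⟩
      · exact Ideal.mem_span_pair.2 ⟨X 1 * X 2, 0, by ring⟩
      · exact Submodule.mem_sup_left hgI3
    · refine ⟨⟨⟨?_, ?_⟩, ?_⟩, ?_⟩
      · exact Ideal.mem_span_pair.2 ⟨0, X 1 * X 2, by ring⟩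
      · exact Ideal.mem_span_pair.2 ⟨0, X 1 * X 2, by ring⟩
      · exact Ideal.mem_span_pair.2 ⟨0, X 1 * X 2, by ring⟩
      · exact Submodule.mem_sup_left (h3 _ _ _ hxI hyI hzI)
    · refine ⟨⟨⟨?_, ?_⟩, ?_⟩, ?_⟩
      · exact Ideal.mem_span_pair.2 ⟨0, X 1 ^ 2, by ring⟩
      · exact Ideal.mem_span_pair.2 ⟨0, X 1 ^ 2, by ring⟩
      · exact Ideal.mem_span_pair.2 ⟨0, X 1 ^ 2, by ring⟩
      · refine Submodule.mem_sup_left ?_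
        have e : (X 1 ^ 2 * X 3 : R) = X 1 * X 1 * X 3 := by ring
        rw [e]; exact h3 _ _ _ hxI hxI hzI
    · refine ⟨⟨⟨?_, ?_⟩, ?_⟩, ?_⟩
      · exact Ideal.mem_span_pair.2 ⟨0, X 2 ^ 2, by ring⟩
      · exact Ideal.mem_span_pair.2 ⟨0, X 2 ^ 2, by ring⟩
      · exact Ideal.mem_span_pair.2 ⟨0, X 2 ^ 2, by ring⟩
      · refine Submodule.mem_sup_left ?_
        have e : (X 2 ^ 2 * X 3 : R) = X 2 * X 2 * X 3 := by ring
        rw [e]; exact h3 _ _ _ hyI hyI hzI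
    · refine ⟨⟨⟨?_, ?_⟩, ?_⟩, ?_⟩
      · exact Ideal.mem_span_pair.2 ⟨0, X 3, by ring⟩
      · exact Ideal.mem_span_pair.2 ⟨0, X 3, by ring⟩
      · exact Ideal.mem_span_pair.2 ⟨0, X 3, by ring⟩
      · exact Submodule.mem_sup_right (Ideal.subset_span rfl)
  refine le_antisymm ?_ hsub
  intro f hf
  obtain ⟨⟨⟨hf1, hf2⟩, hf3⟩, hf4⟩ := hf
  obtain ⟨p, q, hpq⟩ := Ideal.mem_span_pair.1 hf1
  obtain ⟨r, s, hrs⟩ := Ideal.mem_span_pair.1 hf2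
  obtain ⟨u, v, huv⟩ := Ideal.mem_span_pair.1 hf3
  -- divisibility of phi3 f by x, y, x + y
  have hdy : (X 2 : R) ∣ phi3 k f :=
    ⟨phi3 k p, by rw [← hpq, map_add, map_mul, map_mul, hφy, hφz, mul_zero, add_zero, mul_comm]⟩
  have hdx : (X 1 : R) ∣ phi3 k f :=
    ⟨phi3 k r, by rw [← hrs, map_add, map_mul, map_mul, hφx, hφz, mul_zero, add_zero, mul_comm]⟩
  have hdxy : (X 1 + X 2 : R) ∣ phi3 k f := by
    refine ⟨phi3 k u, ?_⟩
    rw [← huv, map_add, map_mul, map_mul, map_add, hφx, hφy, hφz, mul_zero, add_zero, mul_comm]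
  obtain ⟨a, ha⟩ := hdy
  have hxa : (X 1 : R) ∣ a := by
    have h' : (X 1 : R) ∣ X 2 * a := ha ▸ hdx
    rcases (prime_Xi 1).2.2 _ _ h' with h | h
    · exact absurd h not_X1_dvd_X2
    · exact h
  obtain ⟨b, rfl⟩ := hxa
  have hxyb : (X 1 + X 2 : R) ∣ b := by
    have h' : (X 1 + X 2 : R) ∣ X 2 * (X 1 * b) := ha ▸ hdxy
    rcases prime_X1_add_X2.2.2 _ _ h' with h | h
    · exact absurd h not_add_dvd_X2
    · rcases prime_X1_add_X2.2.2 _ _ h with h2 | h2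
      · exact absurd h2 not_add_dvd_X1
      · exact h2
  obtain ⟨c, rfl⟩ := hxyb
  -- ha : phi3 k f = X 2 * (X 1 * ((X 1 + X 2) * c))
  have hφfJr : phi3 k f ∈ Ideal.span {(X 1 : R) ^ 2 * X 2 + X 1 * X 2 ^ 2, X 1 * X 2 * X 3,
      X 1 ^ 2 * X 3, X 2 ^ 2 * X 3, X 3 ^ 2} := by
    rw [ha]
    have e : (X 2 * (X 1 * ((X 1 + X 2) * c)) : R)
        = c * (X 1 ^ 2 * X 2 + X 1 * X 2 ^ 2) := by ring
    rw [e]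
    exact Ideal.mul_mem_left _ _
      (Ideal.subset_span (by simp only [Set.mem_insert_iff, Set.mem_singleton_iff]; tauto))
  have hφfK : phi3 k f ∈ (Ideal.span {(X 1 : R), X 2, X 3}) ^ 3 + Ideal.span {(X 3 : R) ^ 2} := by
    refine Submodule.mem_sup_left ?_
    rw [ha]
    have e : (X 2 * (X 1 * ((X 1 + X 2) * c)) : R)
        = c * (X 1 ^ 2 * X 2 + X 1 * X 2 ^ 2) := by ring
    rw [e]
    exact Ideal.mul_mem_left _ _ hgI3
  obtain ⟨w, hw⟩ := Ideal.mem_span_singleton.1 (sub_phi3_mem f)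
  -- hw : f - phi3 k f = X 3 * w
  have hzwK : (X 3 : R) * w ∈ (Ideal.span {(X 1 : R), X 2, X 3}) ^ 3
      + Ideal.span {(X 3 : R) ^ 2} := by
    rw [← hw]; exact sub_mem hf4 hφfK
  obtain ⟨A, hA, e, he, hAe⟩ := Submodule.mem_sup.1 hzwK
  obtain ⟨b2, hb2⟩ := Ideal.mem_span_singleton'.1 he
  -- derivative facts
  have hD2 : ∀ h ∈ Ideal.span {(X 1 : R), X 2, X 3} * Ideal.span {(X 1 : R), X 2, X 3},
      pderiv 3 h ∈ Ideal.span {(X 1 : R), X 2, X 3} := by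
    intro h hh
    refine Submodule.mul_induction_on hh (fun r1 hr1 s1 hs1 => ?_) (fun a1 b1 ha1 hb1 => ?_)
    · rw [pderiv_mul]
      exact add_mem (Ideal.mul_mem_left _ _ hs1) (Ideal.mul_mem_right _ _ hr1)
    · rw [map_add]; exact add_mem ha1 hb1
  have hD3 : ∀ h ∈ (Ideal.span {(X 1 : R), X 2, X 3}) ^ 3,
      pderiv 3 h ∈ Ideal.span {(X 1 : R), X 2, X 3} * Ideal.span {(X 1 : R), X 2, X 3} := by
    intro h hh
    rw [hpow] at hh
    refine Submodule.mul_induction_on hh (fun r1 hr1 s1 hs1 => ?_) (fun a1 b1 ha1 hb1 => ?_)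
    · rw [pderiv_mul]
      exact add_mem (Ideal.mul_mem_mul (hD2 r1 hr1) hs1) (Ideal.mul_mem_right _ _ hr1)
    · rw [map_add]; exact add_mem ha1 hb1
  -- phi3 maps I into (x, y)
  have hφI : ∀ h ∈ Ideal.span {(X 1 : R), X 2, X 3},
      phi3 k h ∈ Ideal.span {(X 1 : R), X 2} := by
    intro h hh
    refine Submodule.span_induction ?_ ?_ ?_ ?_ hh
    · rintro g hg
      simp only [Set.mem_insert_iff, Set.mem_singleton_iff] at hg
      rcases hg with rfl | rfl | rfl
      · rw [hφx]; exact Ideal.subset_span (by simp)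
      · rw [hφy]; exact Ideal.subset_span (by simp)
      · rw [hφz]; exact zero_mem _
    · rw [map_zero]; exact zero_mem _
    · intro g1 g2 _ _ h1 h2
      rw [map_add]; exact add_mem h1 h2
    · intro a1 g1 _ h1
      rw [smul_eq_mul, map_mul]
      exact Ideal.mul_mem_left _ _ h1
  have hφII : ∀ h ∈ Ideal.span {(X 1 : R), X 2, X 3} * Ideal.span {(X 1 : R), X 2, X 3},
      phi3 k h ∈ Ideal.span {(X 1 : R), X 2} * Ideal.span {(X 1 : R), X 2} := by
    intro h hh
    refine Submodule.mul_induction_on hh (fun r1 hr1 s1 hs1 => ?_) (fun a1 b1 ha1 hb1 => ?_)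
    · rw [map_mul]; exact Ideal.mul_mem_mul (hφI r1 hr1) (hφI s1 hs1)
    · rw [map_add]; exact add_mem ha1 hb1
  have hφdA : phi3 k (pderiv 3 A) ∈ Ideal.span {(X 1 : R), X 2} * Ideal.span {(X 1 : R), X 2} :=
    hφII _ (hD3 A hA)
  -- phi3 w = phi3 (pderiv 3 A)
  have hEq : phi3 k w = phi3 k (pderiv 3 A) := by
    have hd : phi3 k (pderiv 3 (A + e)) = phi3 k (pderiv 3 ((X 3 : R) * w)) := by rw [hAe]
    have he0 : phi3 k (pderiv 3 e) = 0 := by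
      rw [← hb2]
      have e2 : (X 3 : R) ^ 2 = X 3 * X 3 := sq (X 3 : R) ▸ rfl
      rw [e2, pderiv_mul, pderiv_mul, pderiv_X_self]
      simp [hφz]
    have hzw : phi3 k (pderiv 3 ((X 3 : R) * w)) = phi3 k w := by
      rw [pderiv_mul, pderiv_X_self, one_mul, map_add, map_mul, hφz, zero_mul, add_zero]
    rw [map_add, map_add, he0, add_zero, hzw] at hd
    exact hd.symm
  have hφw : phi3 k w ∈ Ideal.span {(X 1 : R), X 2} * Ideal.span {(X 1 : R), X 2} :=
    hEq ▸ hφdA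
  obtain ⟨v2, hv2⟩ := Ideal.mem_span_singleton.1 (sub_phi3_mem w)
  -- hv2 : w - phi3 k w = X 3 * v2
  have hfinal : f = phi3 k f + X 3 * phi3 k w + X 3 * (X 3 * v2) := by
    linear_combination hw + X 3 * hv2
  rw [hfinal]
  refine add_mem (add_mem hφfJr ?_) ?_
  · -- X 3 * phi3 k w ∈ Jr
    have hmulz : Ideal.span {(X 1 : R), X 2} * Ideal.span {(X 1 : R), X 2}
        * Ideal.span {(X 3 : R)} ≤ Ideal.span {(X 1 : R) ^ 2 * X 2 + X 1 * X 2 ^ 2,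
          X 1 * X 2 * X 3, X 1 ^ 2 * X 3, X 2 ^ 2 * X 3, X 3 ^ 2} := by
      rw [Ideal.span_mul_span', Ideal.span_mul_span']
      refine Ideal.span_le.2 ?_
      rintro p hp
      rw [Set.mem_mul] at hp
      obtain ⟨uu, huu, vv, hvv, rfl⟩ := hp
      rw [Set.mem_mul] at huu
      obtain ⟨a1, ha1, a2, ha2, rfl⟩ := huu
      simp only [Set.mem_insert_iff, Set.mem_singleton_iff] at ha1 ha2 hvv
      subst hvv
      rcases ha1 with rfl | rfl <;> rcases ha2 with rfl | rfl
      · have e3 : (X 1 * X 1 * X 3 : R) = X 1 ^ 2 * X 3 := by ring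
        rw [e3]
        exact Ideal.subset_span (by simp only [Set.mem_insert_iff, Set.mem_singleton_iff]; tauto)
      · exact Ideal.subset_span (by simp only [Set.mem_insert_iff, Set.mem_singleton_iff]; tauto)
      · have e3 : (X 2 * X 1 * X 3 : R) = X 1 * X 2 * X 3 := by ring
        rw [e3]
        exact Ideal.subset_span (by simp only [Set.mem_insert_iff, Set.mem_singleton_iff]; tauto)
      · have e3 : (X 2 * X 2 * X 3 : R) = X 2 ^ 2 * X 3 := by ring
        rw [e3]
        exact Ideal.subset_span (by simp only [Set.mem_insert_iff, Set.mem_singleton_iff]; tauto)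
    have hmem : phi3 k w * X 3 ∈ Ideal.span {(X 1 : R), X 2} * Ideal.span {(X 1 : R), X 2}
        * Ideal.span {(X 3 : R)} := Ideal.mul_mem_mul hφw (Ideal.subset_span rfl)
    rw [mul_comm (X 3 : R) (phi3 k w)]
    exact hmulz hmem
  · -- X 3 * (X 3 * v2) ∈ Jr
    have e3 : (X 3 : R) * (X 3 * v2) = v2 * X 3 ^ 2 := by ring
    rw [e3]
    exact Ideal.mul_mem_left _ _
      (Ideal.subset_span (by simp only [Set.mem_insert_iff, Set.mem_singleton_iff]; tauto))
end

section
/- Let k be a field of characteristic 0 and work in the polynomial ring k[t, x, y, z]. Then the ideal quotient (x^2y + xy^2, xyz, x^2z, y^2z, z^2) : (z) equals (x^2, xy, y^2, z). (Geometrically: the residual of the (2,3)-cone configuration X_0 with respect to the plane H = {z = 0} is the scheme 2P|_H, the first infinitesimal neighborhood of P = [1:0:0:0] in H, with ideal (x, y, z)^2 + (z).) -/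
open MvPolynomial

section Aux

variable {σ : Type*} [DecidableEq σ] {R : Type*} [CommRing R]

private noncomputable def substZero (i : σ) : MvPolynomial σ R →ₐ[R] MvPolynomial σ R :=
  aeval fun j => if j = i then 0 else X j

private lemma substZero_X_self (i : σ) : substZero i (X i : MvPolynomial σ R) = 0 := by
  simp [substZero]

private lemma substZero_eq_self (i : σ) (p : MvPolynomial σ R)
    (h : ∀ m ∈ p.support, m i = 0) : substZero i p = p := by
  conv_lhs => rw [p.as_sum]
  conv_rhs => rw [p.as_sum]
  rw [map_sum]
  refine Finset.sum_congr rfl fun m hm => ?_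
  rw [substZero, aeval_monomial, monomial_eq, algebraMap_eq]
  congr 1
  refine Finsupp.prod_congr fun j hj => ?_
  have hji : j ≠ i := by
    intro hji
    exact Finsupp.mem_support_iff.mp hj (by rw [hji]; exact h m hm)
  simp [hji]

private lemma X_dvd_of_substZero_eq_zero (i : σ) (p : MvPolynomial σ R)
    (h : substZero i p = 0) : X i ∣ p := by
  rw [X_dvd_iff_modMonomial_eq_zero]
  have hdecomp := divMonomial_add_modMonomial_single p i
  set r := p.modMonomial (Finsupp.single i 1) with hr
  have hrs : ∀ m ∈ r.support, m i = 0 := by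
    intro m hm
    by_contra hmi
    have hle : Finsupp.single i 1 ≤ m := by
      rw [Finsupp.single_le_iff]
      omega
    have hc := coeff_modMonomial_of_le p hle
    rw [← hr] at hc
    exact (Finsupp.mem_support_iff.mp hm) hc
  have hfix : substZero i r = r := substZero_eq_self i r hrs
  have hpr : substZero i p = r := by
    rw [← hdecomp, map_add, map_mul, hfix, substZero_X_self, zero_mul, zero_add]
  rw [← hpr, h]

private lemma prime_X_aux [IsDomain R] (i : σ) : Prime (X i : MvPolynomial σ R) := by
  refine ⟨X_ne_zero i, ?_, ?_⟩
  · intro hu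
    have := hu.map (substZero i (R := R))
    rw [substZero_X_self] at this
    exact not_isUnit_zero this
  · intro a b hab
    obtain ⟨c, hc⟩ := hab
    have h0 : substZero i a * substZero i b = 0 := by
      rw [← map_mul, hc, map_mul, substZero_X_self, zero_mul]
    rcases mul_eq_zero.mp h0 with h | h
    · exact Or.inl (X_dvd_of_substZero_eq_zero i a h)
    · exact Or.inr (X_dvd_of_substZero_eq_zero i b h)

end Aux

/-- In `k[t,x,y,z]` with `char k = 0`: the ideal quotient
`(x²y + xy², xyz, x²z, y²z, z²) : (z)` equals `(x², xy, y², z)`, i.e. the residual of the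
`(2,3)`-cone configuration with respect to the plane `H = {z = 0}` is the first
infinitesimal neighborhood `2P|_H` of `P = [1:0:0:0]` in `H`. -/
theorem residual_of_two_three_cone_configuration (k : Type*) [Field k] [CharZero k] :
    let x : MvPolynomial (Fin 4) k := X 1
    let y : MvPolynomial (Fin 4) k := X 2
    let z : MvPolynomial (Fin 4) k := X 3
    Submodule.colon
        (Ideal.span {x ^ 2 * y + x * y ^ 2, x * y * z, x ^ 2 * z, y ^ 2 * z, z ^ 2})
        (Ideal.span {z}) =
      Ideal.span {x ^ 2, x * y, y ^ 2, z} := by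
  intro x y z
  apply le_antisymm
  · -- hard direction: colon ≤ span
    intro f hf
    rw [Ideal.mem_colon_span_singleton] at hf
    rw [← Ideal.submodule_span_eq, Submodule.mem_span_insert] at hf
    obtain ⟨a, w1, hw1, hf⟩ := hf
    rw [Submodule.mem_span_insert] at hw1
    obtain ⟨b, w2, hw2, hw1⟩ := hw1
    rw [Submodule.mem_span_insert] at hw2
    obtain ⟨c, w3, hw3, hw2⟩ := hw2
    rw [Submodule.mem_span_insert] at hw3
    obtain ⟨d, w4, hw4, hw3⟩ := hw3
    rw [Submodule.mem_span_singleton] at hw4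
    obtain ⟨e, hw4⟩ := hw4
    subst hw4 hw3 hw2 hw1
    simp only [smul_eq_mul] at hf
    -- key equation : z * (f - stuff) = a * (x²y + xy²)
    have key : z * (f - (b * (x * y) + c * x ^ 2 + d * y ^ 2 + z * e)) =
        a * (x ^ 2 * y + x * y ^ 2) := by
      linear_combination hf
    -- z is prime and does not divide x²y + xy², hence z ∣ a
    have hzprime : Prime z := prime_X_aux 3
    have hznd : ¬ z ∣ (x ^ 2 * y + x * y ^ 2) := by
      rintro ⟨r, hr⟩
      have := congrArg (eval (fun i : Fin 4 => if i = 3 then (0 : k) else 1)) hr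
      simp [x, y, z] at this
    have hza : z ∣ a := by
      rcases (hzprime.dvd_mul.mp ⟨_, key.symm⟩) with h | h
      · exact h
      · exact absurd h hznd
    obtain ⟨a', ha'⟩ := hza
    subst ha'
    -- cancel z
    have hcancel : f = a' * (x ^ 2 * y + x * y ^ 2) + b * (x * y) + c * x ^ 2 + d * y ^ 2
        + e * z := by
      apply mul_left_cancel₀ (X_ne_zero (R := k) (3 : Fin 4))
      show z * f = _
      linear_combination hf
    rw [hcancel, show a' * (x ^ 2 * y + x * y ^ 2) + b * (x * y) + c * x ^ 2 + d * y ^ 2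
        + e * z = (a' * (x + y) + b) * (x * y) + c * (x ^ 2) + d * (y ^ 2) + e * z by ring]
    have h1 : x ^ 2 ∈ Ideal.span ({x ^ 2, x * y, y ^ 2, z} : Set (MvPolynomial (Fin 4) k)) :=
      Ideal.subset_span (Set.mem_insert _ _)
    have h2 : x * y ∈ Ideal.span ({x ^ 2, x * y, y ^ 2, z} : Set (MvPolynomial (Fin 4) k)) :=
      Ideal.subset_span (Set.mem_insert_of_mem _ (Set.mem_insert _ _))
    have h3 : y ^ 2 ∈ Ideal.span ({x ^ 2, x * y, y ^ 2, z} : Set (MvPolynomial (Fin 4) k)) :=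
      Ideal.subset_span (Set.mem_insert_of_mem _ (Set.mem_insert_of_mem _ (Set.mem_insert _ _)))
    have h4 : z ∈ Ideal.span ({x ^ 2, x * y, y ^ 2, z} : Set (MvPolynomial (Fin 4) k)) :=
      Ideal.subset_span (Set.mem_insert_of_mem _ (Set.mem_insert_of_mem _
        (Set.mem_insert_of_mem _ rfl)))
    exact add_mem (add_mem (add_mem (Ideal.mul_mem_left _ _ h2) (Ideal.mul_mem_left _ _ h1))
      (Ideal.mul_mem_left _ _ h3)) (Ideal.mul_mem_left _ _ h4)
  · -- easy direction: span ≤ colon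
    rw [Ideal.span_le]
    rintro p hp
    simp only [Set.mem_insert_iff, Set.mem_singleton_iff] at hp
    rw [SetLike.mem_coe, Ideal.mem_colon_span_singleton]
    rcases hp with rfl | rfl | rfl | rfl
    · exact Ideal.subset_span (Set.mem_insert_of_mem _ (Set.mem_insert_of_mem _
        (Set.mem_insert _ _)))
    · exact Ideal.subset_span (Set.mem_insert_of_mem _ (Set.mem_insert _ _))
    · exact Ideal.subset_span (Set.mem_insert_of_mem _ (Set.mem_insert_of_mem _
        (Set.mem_insert_of_mem _ (Set.mem_insert _ _))))
    · rw [show z * z = z ^ 2 by ring]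
      exact Ideal.subset_span (Set.mem_insert_of_mem _ (Set.mem_insert_of_mem _
        (Set.mem_insert_of_mem _ (Set.mem_insert_of_mem _ rfl))))
end

section
/- Let k be a field of characteristic 0, let s ≥ 3 be an integer, and let λ ∈ k with λ ≠ 0. In k[t, x, y, z], set J_λ = (x, z) ∩ (y, z) ∩ (x + y, z) ∩ (x + 2y, z) ∩ … ∩ (x + (s−3)y, z) ∩ ((x, y, z)^{s−1} + (z^2)) ∩ (x − y − λt, z) ∩ (x, x − y − λt, z)^2 ∩ (y, x − y − λt, z)^2 ∩ (x + y, x − y − λt, z)^2 ∩ … ∩ (x + (s−3)y, x − y − λt, z)^2 (factors with x + iy over i = 1, …, s−3, empty when s = 3). Then the ideal quotient J_λ : (z) equals (x · y · (x + y) ⋯ (x + (s−3)y)) + (x, y)^{s−2}·(x − y − λt) + (z), where (x, y)^{s−2}·(x − y − λt) denotes the product of the ideal (x, y)^{s−2} with the principal ideal (x − y − λt). (This computes the residual of the scheme X_λ with respect to the plane z = 0.) -/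
open MvPolynomial

namespace ResidualAux

set_option linter.unusedSectionVars false
set_option linter.unreachableTactic false
set_option linter.unusedTactic false
set_option maxHeartbeats 1000000

variable {k : Type*} [Field k] [CharZero k]

local notation "R4" => MvPolynomial (Fin 4) k

/-- generic substitution-difference lemma -/
lemma sub_aeval_mem (g : Fin 4 → R4) (I : Ideal R4) (hg : ∀ j, X j - g j ∈ I) (f : R4) :
    f - aeval g f ∈ I := by
  induction f using MvPolynomial.induction_on with
  | C a => simp
  | add p q hp hq =>
      have := I.add_mem hp hq
      simpa [map_add, sub_add_sub_comm] using this
  | mul_X p j hp =>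
      rw [map_mul, aeval_X]
      have h : p * X j - aeval g p * g j = (p - aeval g p) * g j + p * (X j - g j) := by ring
      rw [h]
      exact I.add_mem (I.mul_mem_right _ hp) (I.mul_mem_left _ (hg j))

lemma mem_span_sub (i0 : Fin 4) (u : R4) (f : R4) :
    f - aeval (Function.update X i0 u) f ∈ Ideal.span {X i0 - u} := by
  apply sub_aeval_mem
  intro j
  by_cases h : j = i0
  · subst h; rw [Function.update_self]; exact Ideal.subset_span rfl
  · rw [Function.update_of_ne h]; simp

lemma ker_aeval_update (i0 : Fin 4) (u : R4) (hu : aeval (Function.update X i0 u) u = u) :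
    RingHom.ker ((aeval (Function.update X i0 u) : R4 →ₐ[k] R4) : R4 →+* R4) = Ideal.span {X i0 - u} := by
  apply le_antisymm
  · intro f hf
    have h0 : (aeval (Function.update X i0 u) : R4 →ₐ[k] R4) f = 0 := hf
    have := mem_span_sub (k := k) i0 u f
    rwa [show (aeval (Function.update X i0 u)) f = 0 from h0, sub_zero] at this
  · rw [Ideal.span_le, Set.singleton_subset_iff]
    show aeval (Function.update X i0 u) (X i0 - u) = 0
    rw [map_sub, aeval_X, Function.update_self, hu, sub_self]

lemma prime_sub (i0 : Fin 4) (u : R4) (hu : aeval (Function.update X i0 u) u = u)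
    (hne : X i0 - u ≠ 0) : Prime (X i0 - u) := by
  rw [← Ideal.span_singleton_prime hne, ← ker_aeval_update i0 u hu]
  exact RingHom.ker_isPrime _

lemma not_dvd_of_eval_ne (i0 : Fin 4) (u v : R4) (hu : aeval (Function.update X i0 u) u = u)
    (h : aeval (Function.update X i0 u) v ≠ 0) : ¬ (X i0 - u ∣ v) := by
  rintro ⟨w, rfl⟩
  apply h
  rw [map_mul, map_sub, aeval_X, Function.update_self, hu, sub_self, zero_mul]

lemma form_eq (c : k) : (X 1 + C c * X 2 : R4) = X 1 - (-(C c * X 2)) := by ring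

lemma aeval_update_uy (c b : k) :
    aeval (Function.update X 1 (-(C c * X 2))) (-(C b * X 2) : R4) = -(C b * X 2) := by
  rw [map_neg, map_mul, aeval_C, aeval_X, Function.update_of_ne (by decide)]
  rfl

lemma X1_add_ne (c : k) : (X 1 + C c * X 2 : R4) ≠ 0 := by
  intro h
  have := congrArg (eval fun i => if i = (1 : Fin 4) then (1:k) else 0) h
  simp at this

lemma prime_form (c : k) : Prime (X 1 + C c * X 2 : R4) := by
  rw [form_eq]
  refine prime_sub 1 _ (aeval_update_uy c c) ?_
  rw [← form_eq]; exact X1_add_ne c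

lemma prime_X2 : Prime (X 2 : R4) := by
  have h : (X 2 : R4) = X 2 - 0 := by ring
  rw [h]
  refine prime_sub 2 0 (map_zero _) ?_
  rw [← h]; exact X_ne_zero 2

lemma not_form_dvd (c : k) (v : R4)
    (h : aeval (Function.update X 1 (-(C c * X 2))) v ≠ 0) : ¬ ((X 1 + C c * X 2 : R4) ∣ v) := by
  rw [form_eq]
  exact not_dvd_of_eval_ne 1 _ v (aeval_update_uy c c) h

lemma not_X2_dvd (v : R4) (h : aeval (Function.update X 2 (0:R4)) v ≠ 0) : ¬ ((X 2:R4) ∣ v) := by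
  have h2 : (X 2 : R4) = X 2 - 0 := by ring
  rw [h2]
  exact not_dvd_of_eval_ne 2 0 v (map_zero _) h

lemma not_X2_dvd_form (c : k) : ¬ ((X 2:R4) ∣ (X 1 + C c * X 2 : R4)) := by
  apply not_X2_dvd
  simp only [map_add, map_mul, aeval_C, aeval_X, algebraMap_eq,
    Function.update_of_ne (show (1:Fin 4) ≠ 2 by decide), Function.update_self, mul_zero, add_zero]
  exact X_ne_zero 1

lemma not_form_dvd_X2 (c : k) : ¬ ((X 1 + C c * X 2 : R4) ∣ (X 2 : R4)) := by
  apply not_form_dvd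
  rw [aeval_X, Function.update_of_ne (show (2:Fin 4) ≠ 1 by decide)]
  exact X_ne_zero 2

lemma not_form_dvd_form (c b : k) (hb : b ≠ c) :
    ¬ ((X 1 + C c * X 2 : R4) ∣ (X 1 + C b * X 2 : R4)) := by
  apply not_form_dvd
  simp only [map_add, map_mul, aeval_C, aeval_X, algebraMap_eq, Function.update_self,
    Function.update_of_ne (show (2:Fin 4) ≠ 1 by decide)]
  have h2 : -(C c * X 2) + C b * X 2 = C (b - c) * (X 2 : R4) := by rw [map_sub]; ring
  rw [h2]
  simp only [ne_eq, mul_eq_zero, not_or]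
  exact ⟨by simpa [sub_eq_zero] using hb, X_ne_zero 2⟩

lemma not_form_dvd_X1 (c : k) (hc : c ≠ 0) : ¬ ((X 1 + C c * X 2 : R4) ∣ (X 1 : R4)) := by
  apply not_form_dvd
  rw [aeval_X, Function.update_self]
  simp only [ne_eq, neg_eq_zero, mul_eq_zero, not_or]
  exact ⟨by simpa using hc, X_ne_zero 2⟩

lemma prime_mul_dvd {p w q : R4} (hp : Prime p) (hpw : ¬ p ∣ w) (hw : w ∣ q) (hq : p ∣ q) :
    w * p ∣ q := by
  obtain ⟨q1, rfl⟩ := hw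
  obtain ⟨q2, rfl⟩ := (hp.2.2 _ _ hq).resolve_left hpw
  exact ⟨q2, by ring⟩

/-- the product of the distinct linear forms divides `q` -/
lemma prod_forms_dvd (q : R4) (T : Finset ℕ) (h0 : 0 ∉ T)
    (hx : (X 1 : R4) ∣ q) (hy : (X 2 : R4) ∣ q)
    (hT : ∀ i ∈ T, (X 1 + C (i:k) * X 2 : R4) ∣ q) :
    X 1 * X 2 * ∏ i ∈ T, (X 1 + C (i:k) * X 2) ∣ q := by
  classical
  induction T using Finset.induction_on with
  | empty =>
      simp only [Finset.prod_empty, mul_one]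
      have hx1 : (X 1 + C (0:k) * X 2 : R4) = X 1 := by simp
      have hprime1 : Prime (X 1 : R4) := by rw [← hx1]; exact prime_form 0
      have hnd : ¬ ((X 2 : R4) ∣ (X 1 : R4)) := by
        rw [← hx1]; exact not_X2_dvd_form 0
      exact prime_mul_dvd prime_X2 hnd hx hy
  | @insert a T' haT' ih =>
      rw [Finset.prod_insert haT', show (X 1 * X 2 * ((X 1 + C (a:k) * X 2) * ∏ i ∈ T', (X 1 + C (i:k) * X 2)) : R4)
        = (X 1 * X 2 * ∏ i ∈ T', (X 1 + C (i:k) * X 2)) * (X 1 + C (a:k) * X 2) by ring]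
      have ha0 : a ≠ 0 := fun h => h0 (by simp [h])
      have hw : X 1 * X 2 * ∏ i ∈ T', (X 1 + C (i:k) * X 2) ∣ q :=
        ih (fun h => h0 (Finset.mem_insert_of_mem h)) (fun i hi => hT i (Finset.mem_insert_of_mem hi))
      have hp : Prime (X 1 + C (a:k) * X 2 : R4) := prime_form _
      refine prime_mul_dvd hp ?_ hw (hT a (Finset.mem_insert_self a T'))
      intro hd
      rcases (hp.2.2 _ _ hd) with h1 | h1
      · rcases (hp.2.2 _ _ h1) with h2 | h2
        · exact not_form_dvd_X1 _ (Nat.cast_ne_zero.mpr ha0) h2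
        · exact not_form_dvd_X2 _ h2
      · obtain ⟨i, hi, hdvd⟩ := hp.exists_mem_finset_dvd h1
        have hia : (i:k) ≠ (a:k) := by
          have : i ≠ a := fun h => haT' (h ▸ hi)
          exact_mod_cast this
        exact not_form_dvd_form _ _ hia hdvd

/-- polynomials all of whose coefficients in xy-degree `< m` vanish -/
def wIdeal (m : ℕ) : Ideal R4 where
  carrier := {h | ∀ d : Fin 4 →₀ ℕ, d 1 + d 2 < m → coeff d h = 0}
  zero_mem' := fun d _ => by simp
  add_mem' := fun {a b} ha hb d hd => by rw [coeff_add, ha d hd, hb d hd, add_zero]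
  smul_mem' := fun c h hh d hd => by
    classical
    rw [smul_eq_mul, coeff_mul]
    apply Finset.sum_eq_zero
    rintro ⟨a, b⟩ hab
    have hab' : a + b = d := Finset.HasAntidiagonal.mem_antidiagonal.mp hab
    have hb : b 1 + b 2 < m := by
      have h1 : a 1 + b 1 = d 1 := by rw [← hab']; simp
      have h2 : a 2 + b 2 = d 2 := by rw [← hab']; simp
      omega
    rw [hh b hb, mul_zero]

lemma mem_wIdeal {m : ℕ} {h : R4} :
    h ∈ wIdeal (k := k) m ↔ ∀ d : Fin 4 →₀ ℕ, d 1 + d 2 < m → coeff d h = 0 := Iff.rfl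

lemma span_xy_pow_le (m : ℕ) :
    (Ideal.span {X 1, X 2} : Ideal R4) ^ m ≤ wIdeal m := by
  classical
  induction m with
  | zero => intro h _ d hd; omega
  | succ m ih =>
      rw [pow_succ]
      rw [Ideal.mul_le]
      intro r hr s hs
      obtain ⟨a, b, rfl⟩ := Ideal.mem_span_pair.mp hs
      have hkey : ∀ p : R4, p ∈ wIdeal (k := k) m → ∀ i : Fin 4, i = 1 ∨ i = 2 →
          p * X i ∈ wIdeal (k := k) (m+1) := by
        intro p hp i hi d hd
        rw [coeff_mul_X']
        split_ifs with hmem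
        · apply hp
          have hd1 : d i ≠ 0 := Finsupp.mem_support_iff.mp hmem
          have e1 : (d - Finsupp.single i 1 : Fin 4 →₀ ℕ) 1 = d 1 - Finsupp.single i 1 1 :=
            Finsupp.tsub_apply _ _ _
          have e2 : (d - Finsupp.single i 1 : Fin 4 →₀ ℕ) 2 = d 2 - Finsupp.single i 1 2 :=
            Finsupp.tsub_apply _ _ _
          rcases hi with rfl | rfl <;>
            simp only [Finsupp.single_apply, if_pos rfl] at e1 e2 <;>
            · simp only [show ((1:Fin 4) = 2) = False by simp, show ((2:Fin 4) = 1) = False by simp,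
                if_false, if_true] at e1 e2
              omega
        · rfl
      have h1 : r * (a * X 1 + b * X 2) = (a * r) * X 1 + (b * r) * X 2 := by ring
      rw [h1]
      exact add_mem (hkey _ ((wIdeal m).mul_mem_left a (ih hr)) 1 (Or.inl rfl))
        (hkey _ ((wIdeal m).mul_mem_left b (ih hr)) 2 (Or.inr rfl))

lemma monomial_mem_pow (d : Fin 4 →₀ ℕ) (c : k) (m : ℕ) (hm : m ≤ d 1 + d 2) :
    (monomial d c : R4) ∈ (Ideal.span {X 1, X 2} : Ideal R4) ^ m := by
  have hx : (X 1 : R4) ∈ Ideal.span {X 1, X 2} := Ideal.subset_span (by simp)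
  have hy : (X 2 : R4) ∈ Ideal.span {X 1, X 2} := Ideal.subset_span (by simp)
  have key : (monomial d c : R4) =
      monomial (d - Finsupp.single 1 (d 1) - Finsupp.single 2 (d 2)) c * X 1 ^ (d 1) * X 2 ^ (d 2) := by
    have hind : d = (d - Finsupp.single 1 (d 1) - Finsupp.single 2 (d 2)) +
        Finsupp.single 1 (d 1) + Finsupp.single 2 (d 2) := by
      ext j
      fin_cases j <;>
        simp [Finsupp.add_apply, Finsupp.tsub_apply, Finsupp.single_apply] <;> omega
    conv_lhs => rw [hind]
    rw [X_pow_eq_monomial, X_pow_eq_monomial, monomial_mul, monomial_mul, mul_one, mul_one]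
  rw [key, mul_assoc]
  apply Ideal.mul_mem_left
  have : (X 1 : R4) ^ (d 1) * X 2 ^ (d 2) ∈ (Ideal.span {X 1, X 2} : Ideal R4) ^ (d 1 + d 2) := by
    rw [pow_add]
    exact Ideal.mul_mem_mul (Ideal.pow_mem_pow hx _) (Ideal.pow_mem_pow hy _)
  exact Ideal.pow_le_pow_right hm this

lemma wIdeal_le (m : ℕ) : wIdeal (k := k) m ≤ (Ideal.span {X 1, X 2} : Ideal R4) ^ m := by
  intro h hh
  rw [← support_sum_monomial_coeff h]
  apply Ideal.sum_mem
  intro d hd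
  apply monomial_mem_pow
  by_contra hcon
  exact (mem_support_iff.mp hd) (hh d (by omega))

/-- key primary-decomposition-style step: if `L * q` has all low xy-coefficients zero,
then so does `q`. -/
lemma coeff_of_L_mul {l : k} (hl : l ≠ 0) (q : R4) (m : ℕ)
    (h : ∀ d : Fin 4 →₀ ℕ, d 1 + d 2 < m →
      coeff d ((X 1 - X 2 - C l * X 0) * q) = 0) :
    ∀ d : Fin 4 →₀ ℕ, d 1 + d 2 < m → coeff d q = 0 := by
  classical
  suffices H : ∀ n : ℕ, ∀ d : Fin 4 →₀ ℕ, d 1 + d 2 = n → n < m → coeff d q = 0 by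
    exact fun d hd => H _ d rfl hd
  intro n
  induction n using Nat.strong_induction_on with
  | _ n ih =>
    intro d hn hm
    set τ : Fin 4 →₀ ℕ := d + Finsupp.single 0 1 with hτdef
    have hτ1 : τ 1 = d 1 := by simp [hτdef, Finsupp.single_apply]
    have hτ2 : τ 2 = d 2 := by simp [hτdef, Finsupp.single_apply]
    have hτlt : τ 1 + τ 2 < m := by omega
    have h0 := h τ hτlt
    have hexp : (X 1 - X 2 - C l * X 0) * q = X 1 * q - X 2 * q - C l * (X 0 * q) := by ring
    rw [hexp, coeff_sub, coeff_sub, coeff_C_mul] at h0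
    have ht : coeff τ (X 0 * q) = coeff d q := by
      rw [coeff_X_mul']
      have : (0:Fin 4) ∈ τ.support := by
        rw [Finsupp.mem_support_iff]
        simp [hτdef, Finsupp.single_apply]
      rw [if_pos this]
      congr 1
      simp [hτdef]
    have hx : coeff τ (X 1 * q) = 0 := by
      rw [coeff_X_mul']
      split_ifs with hmem
      · have hd1 : d 1 ≠ 0 := by
          have := Finsupp.mem_support_iff.mp hmem; omega
        set τ' := τ - Finsupp.single 1 1 with hτ'
        have e1 : τ' 1 = d 1 - 1 := by simp [hτ', Finsupp.tsub_apply, hτ1]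
        have e2 : τ' 2 = d 2 := by simp [hτ', Finsupp.tsub_apply, Finsupp.single_apply, hτ2]
        exact ih (τ' 1 + τ' 2) (by omega) τ' rfl (by omega)
      · rfl
    have hy : coeff τ (X 2 * q) = 0 := by
      rw [coeff_X_mul']
      split_ifs with hmem
      · have hd2 : d 2 ≠ 0 := by
          have := Finsupp.mem_support_iff.mp hmem; omega
        set τ' := τ - Finsupp.single 2 1 with hτ'
        have e1 : τ' 1 = d 1 := by simp [hτ', Finsupp.tsub_apply, Finsupp.single_apply, hτ1]
        have e2 : τ' 2 = d 2 - 1 := by simp [hτ', Finsupp.tsub_apply, hτ2]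
        exact ih (τ' 1 + τ' 2) (by omega) τ' rfl (by omega)
      · rfl
    rw [hx, hy, ht] at h0
    have hlc : l * coeff d q = 0 := by linear_combination -h0
    rcases mul_eq_zero.mp hlc with h | h
    · exact absurd h hl
    · exact h

noncomputable def phiz : MvPolynomial (Fin 4) k →ₐ[k] MvPolynomial (Fin 4) k :=
  aeval (Function.update X 3 0)

lemma phiz_X3 : phiz (X 3 : R4) = 0 := by
  rw [phiz, aeval_X, Function.update_self]

lemma phiz_X_ne (i : Fin 4) (h : i ≠ 3) : phiz (X i : R4) = X i := by
  rw [phiz, aeval_X, Function.update_of_ne h]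

lemma phiz_C (a : k) : phiz (C a : R4) = C a := by
  rw [phiz, aeval_C, algebraMap_eq]

/-- the "first-order jet along z" ideal -/
noncomputable def Nid (A B : Ideal R4) (hAB : A ≤ B) : Ideal R4 where
  carrier := {h | phiz h ∈ A ∧ phiz (pderiv 3 h) ∈ B}
  zero_mem' := ⟨by simp, by simp⟩
  add_mem' := fun {a b} ha hb => ⟨by rw [map_add]; exact add_mem ha.1 hb.1,
    by rw [map_add, map_add]; exact add_mem ha.2 hb.2⟩
  smul_mem' := fun c h hh => by
    refine ⟨?_, ?_⟩
    · rw [smul_eq_mul, map_mul]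
      exact A.mul_mem_left _ hh.1
    · rw [smul_eq_mul, pderiv_mul, map_add, map_mul, map_mul]
      exact add_mem (B.mul_mem_left _ (hAB hh.1)) (B.mul_mem_left _ hh.2)

lemma mem_Nid {A B : Ideal R4} {hAB : A ≤ B} {h : R4} :
    h ∈ Nid A B hAB ↔ phiz h ∈ A ∧ phiz (pderiv 3 h) ∈ B := Iff.rfl

lemma Nid_mono {A A' B B' : Ideal R4} {h h'} (hA : A ≤ A') (hB : B ≤ B') :
    Nid A B h ≤ Nid A' B' h' := fun _ hf => ⟨hA hf.1, hB hf.2⟩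

lemma mul_le_Nid {I J A B A' B' : Ideal R4} {hAB : A ≤ B} {hAB' : A' ≤ B'}
    (hI : I ≤ Nid A B hAB) (hJ : J ≤ Nid A' B' hAB') :
    I * J ≤ Nid (A * A') (A * B' + B * A')
      (le_trans (Ideal.mul_mono le_rfl hAB') le_sup_left) := by
  rw [Ideal.mul_le]
  intro r hr s hs
  obtain ⟨hr1, hr2⟩ := hI hr
  obtain ⟨hs1, hs2⟩ := hJ hs
  refine ⟨?_, ?_⟩
  · rw [map_mul]; exact Ideal.mul_mem_mul hr1 hs1
  · rw [pderiv_mul, map_add, map_mul, map_mul]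
    exact add_mem (Submodule.mem_sup_right (Ideal.mul_mem_mul hr2 hs1))
      (Submodule.mem_sup_left (Ideal.mul_mem_mul hr1 hs2))

lemma M_le_Nid : (Ideal.span {X 1, X 2, X 3} : Ideal R4) ≤
    Nid (Ideal.span {X 1, X 2}) ⊤ le_top := by
  rw [Ideal.span_le]
  rintro g (rfl | rfl | rfl)
  · exact ⟨by rw [phiz_X_ne 1 (by decide)]; exact Ideal.subset_span (by simp),
      by rw [pderiv_X_of_ne (by decide), map_zero]; trivial⟩
  · exact ⟨by rw [phiz_X_ne 2 (by decide)]; exact Ideal.subset_span (by simp),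
      by rw [pderiv_X_of_ne (by decide), map_zero]; trivial⟩
  · exact ⟨by rw [phiz_X3]; exact zero_mem _, by rw [pderiv_X_self, map_one]; trivial⟩

lemma M_pow_le_Nid (n : ℕ) : (Ideal.span {X 1, X 2, X 3} : Ideal R4) ^ (n+1) ≤
    Nid ((Ideal.span {X 1, X 2}) ^ (n+1)) ((Ideal.span {X 1, X 2}) ^ n)
      (Ideal.pow_le_pow_right (Nat.le_succ n)) := by
  induction n with
  | zero =>
      rw [pow_one]
      refine le_trans M_le_Nid (Nid_mono ?_ ?_)
      · rw [pow_one]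
      · rw [pow_zero, Ideal.one_eq_top]
  | succ n ih =>
      rw [pow_succ]
      refine le_trans (mul_le_Nid ih M_le_Nid) (Nid_mono ?_ ?_)
      · rw [← pow_succ]
      · exact sup_le Ideal.mul_le_left (by rw [← pow_succ])

lemma phiz_phiz (f : R4) : phiz (phiz f) = phiz f := by
  have h : (phiz (k := k)).comp phiz = phiz := by
    apply MvPolynomial.algHom_ext
    intro i
    by_cases h : i = 3
    · subst h
      rw [AlgHom.comp_apply, phiz_X3, map_zero]
    · rw [AlgHom.comp_apply, phiz_X_ne i h, phiz_X_ne i h]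
  exact DFunLike.congr_fun h f

lemma sub_phiz_mem (f : R4) : f - phiz f ∈ Ideal.span {(X 3 : R4)} := by
  have := mem_span_sub (k := k) 3 0 f
  rw [sub_zero] at this
  exact this

lemma D_mul_X3 (f : R4) : phiz (pderiv 3 (f * X 3)) = phiz f := by
  rw [pderiv_mul, pderiv_X_self, mul_one, map_add, map_mul, phiz_X3, mul_zero, zero_add]

noncomputable def psil (l : k) : MvPolynomial (Fin 4) k →ₐ[k] MvPolynomial (Fin 4) k :=
  aeval (Function.update X 0 (C l⁻¹ * (X 1 - X 2)))

lemma psil_X0 (l : k) : psil l (X 0 : R4) = C l⁻¹ * (X 1 - X 2) := by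
  rw [psil, aeval_X, Function.update_self]

lemma psil_X_ne (l : k) (i : Fin 4) (h : i ≠ 0) : psil l (X i : R4) = X i := by
  rw [psil, aeval_X, Function.update_of_ne h]

lemma psil_C (l : k) (a : k) : psil l (C a : R4) = C a := by
  rw [psil, aeval_C, algebraMap_eq]

lemma psil_L (l : k) (hl : l ≠ 0) : psil l (X 1 - X 2 - C l * X 0 : R4) = 0 := by
  rw [map_sub, map_sub, map_mul, psil_X0, psil_C, psil_X_ne l 1 (by decide),
    psil_X_ne l 2 (by decide), ← mul_assoc, ← map_mul, mul_inv_cancel₀ hl, map_one, one_mul,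
    sub_self]

lemma sub_psil_mem (l : k) (hl : l ≠ 0) (f : R4) :
    f - psil l f ∈ Ideal.span {(X 1 - X 2 - C l * X 0 : R4)} := by
  have h1 := mem_span_sub (k := k) 0 (C l⁻¹ * (X 1 - X 2)) f
  have heq : Ideal.span {(X 0 - C l⁻¹ * (X 1 - X 2) : R4)} =
      Ideal.span {(X 1 - X 2 - C l * X 0 : R4)} := by
    apply le_antisymm <;> rw [Ideal.span_le, Set.singleton_subset_iff] <;>
      rw [SetLike.mem_coe, Ideal.mem_span_singleton]
    · refine ⟨-C l⁻¹, ?_⟩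
      rw [show (X 1 - X 2 - C l * X 0 : R4) * -C l⁻¹
          = (C l⁻¹ * C l) * X 0 - C l⁻¹ * (X 1 - X 2) by ring, ← map_mul,
        inv_mul_cancel₀ hl, map_one, one_mul]
    · refine ⟨-C l, ?_⟩
      rw [show (X 0 - C l⁻¹ * (X 1 - X 2) : R4) * -C l
          = (C l * C l⁻¹) * (X 1 - X 2) - C l * X 0 by ring, ← map_mul,
        mul_inv_cancel₀ hl, map_one, one_mul]
  exact heq ▸ h1
lemma phiz_L (l : k) : phiz (X 1 - X 2 - C l * X 0 : R4) = X 1 - X 2 - C l * X 0 := by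
  rw [map_sub, map_sub, map_mul, phiz_C, phiz_X_ne 0 (by decide), phiz_X_ne 1 (by decide),
    phiz_X_ne 2 (by decide)]

lemma pderiv3_L (l : k) : pderiv 3 (X 1 - X 2 - C l * X 0 : R4) = 0 := by
  rw [map_sub, map_sub, pderiv_mul, pderiv_X_of_ne (by decide), pderiv_X_of_ne (by decide),
    pderiv_X_of_ne (by decide), pderiv_C]
  ring

lemma phiz_form (c : k) : phiz (X 1 + C c * X 2 : R4) = X 1 + C c * X 2 := by
  rw [map_add, map_mul, phiz_C, phiz_X_ne 1 (by decide), phiz_X_ne 2 (by decide)]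

lemma pderiv3_form (c : k) : pderiv 3 (X 1 + C c * X 2 : R4) = 0 := by
  rw [map_add, pderiv_mul, pderiv_X_of_ne (by decide), pderiv_X_of_ne (by decide), pderiv_C]
  ring

lemma Ia_deriv (n : ℕ) {h : R4}
    (hh : h ∈ (Ideal.span {X 1, X 2, X 3} : Ideal R4) ^ (n+1) + Ideal.span {(X 3 : R4) ^ 2}) :
    phiz (pderiv 3 h) ∈ (Ideal.span {X 1, X 2} : Ideal R4) ^ n := by
  have hz2 : Ideal.span {(X 3 : R4) ^ 2} ≤
      Nid ((Ideal.span {X 1, X 2}) ^ (n+1)) ((Ideal.span {X 1, X 2}) ^ n)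
        (Ideal.pow_le_pow_right (Nat.le_succ n)) := by
    rw [Ideal.span_le, Set.singleton_subset_iff]
    refine ⟨?_, ?_⟩
    · rw [map_pow, phiz_X3]
      rw [zero_pow (two_ne_zero)]
      exact zero_mem _
    · have hd : pderiv 3 ((X 3 : R4) ^ 2) = X 3 + X 3 := by
        rw [sq, pderiv_mul, pderiv_X_self, one_mul, mul_one]
      rw [hd, map_add, phiz_X3, add_zero]
      exact zero_mem _
  exact ((sup_le (M_pow_le_Nid n) hz2) hh).2

lemma square_deriv {g w : R4} (hg1 : phiz g = g) (hg2 : pderiv 3 g = 0)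
    (hw1 : phiz w = w) (hw2 : pderiv 3 w = 0) {h : R4}
    (hh : h ∈ (Ideal.span {g, w, X 3} : Ideal R4) ^ 2) :
    phiz (pderiv 3 h) ∈ Ideal.span {g, w} := by
  have base : (Ideal.span {g, w, X 3} : Ideal R4) ≤ Nid (Ideal.span {g, w}) ⊤ le_top := by
    rw [Ideal.span_le]
    rintro p (rfl | rfl | rfl)
    · exact ⟨by rw [hg1]; exact Ideal.subset_span (by simp), by rw [hg2, map_zero]; trivial⟩
    · exact ⟨by rw [hw1]; exact Ideal.subset_span (by simp), by rw [hw2, map_zero]; trivial⟩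
    · exact ⟨by rw [phiz_X3]; exact zero_mem _, by rw [pderiv_X_self, map_one]; trivial⟩
  have h2 : (Ideal.span {g, w, X 3} : Ideal R4) ^ 2 ≤
      Nid (Ideal.span {g, w}) (Ideal.span {g, w}) le_rfl := by
    rw [sq]
    refine le_trans (mul_le_Nid base base) (Nid_mono ?_ ?_)
    · exact Ideal.mul_le_right
    · exact sup_le Ideal.mul_le_left Ideal.mul_le_right
  exact (h2 hh).2

lemma prod_mem_pow {I : Ideal R4} (T : Finset ℕ) (f : ℕ → R4) (h : ∀ i ∈ T, f i ∈ I) :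
    ∏ i ∈ T, f i ∈ I ^ T.card := by
  classical
  induction T using Finset.induction_on with
  | empty => rw [Finset.prod_empty, Finset.card_empty, pow_zero, Ideal.one_eq_top]; trivial
  | @insert a T' ha ih =>
      rw [Finset.prod_insert ha, Finset.card_insert_of_notMem ha, pow_succ, mul_comm (f a)]
      exact Ideal.mul_mem_mul (ih (fun i hi => h i (Finset.mem_insert_of_mem hi)))
        (h a (Finset.mem_insert_self a T'))

end ResidualAux

set_option maxHeartbeats 4000000 in
open ResidualAux in
/-- In `k[t,x,y,z]` with `char k = 0`, `s ≥ 3`, `λ ≠ 0`: the residual with respect to the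
plane `z = 0` of the scheme `X_λ` (a `(2,s-1)`-cone configuration plus the line
`x - y - λt = z = 0` with double points at its `s-1` intersections with the cone lines) is
given by `J_λ : (z) = (x·y·(x+y)⋯(x+(s-3)y)) + (x,y)^{s-2}·(x-y-λt) + (z)`. -/
theorem residual_of_X_lambda (k : Type*) [Field k] [CharZero k] (s : ℕ) (hs : 3 ≤ s)
    (l : k) (hl : l ≠ 0) :
    let t : MvPolynomial (Fin 4) k := X 0
    let x : MvPolynomial (Fin 4) k := X 1
    let y : MvPolynomial (Fin 4) k := X 2
    let z : MvPolynomial (Fin 4) k := X 3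
    let J : Ideal (MvPolynomial (Fin 4) k) :=
      Ideal.span {x, z} ⊓ Ideal.span {y, z} ⊓
        (⨅ i ∈ Finset.Icc 1 (s - 3), Ideal.span {x + i • y, z}) ⊓
        ((Ideal.span {x, y, z}) ^ (s - 1) + Ideal.span {z ^ 2}) ⊓
        Ideal.span {x - y - C l * t, z} ⊓
        (Ideal.span {x, x - y - C l * t, z}) ^ 2 ⊓
        (Ideal.span {y, x - y - C l * t, z}) ^ 2 ⊓
        (⨅ i ∈ Finset.Icc 1 (s - 3), (Ideal.span {x + i • y, x - y - C l * t, z}) ^ 2)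
    Submodule.colon J (Ideal.span {z}) =
      Ideal.span {x * y * ∏ i ∈ Finset.Icc 1 (s - 3), (x + i • y)} +
        (Ideal.span {x, y}) ^ (s - 2) * Ideal.span {x - y - C l * t} +
        Ideal.span {z} := by
  intro t x y z J
  have hJ : J = Ideal.span {x, z} ⊓ Ideal.span {y, z} ⊓
        (⨅ i ∈ Finset.Icc 1 (s - 3), Ideal.span {x + i • y, z}) ⊓
        ((Ideal.span {x, y, z}) ^ (s - 1) + Ideal.span {z ^ 2}) ⊓
        Ideal.span {x - y - C l * t, z} ⊓
        (Ideal.span {x, x - y - C l * t, z}) ^ 2 ⊓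
        (Ideal.span {y, x - y - C l * t, z}) ^ 2 ⊓
        (⨅ i ∈ Finset.Icc 1 (s - 3), (Ideal.span {x + i • y, x - y - C l * t, z}) ^ 2) := rfl
  have ht : t = X 0 := rfl
  have hx : x = X 1 := rfl
  have hy : y = X 2 := rfl
  have hz : z = X 3 := rfl
  rw [hJ]
  simp only [ht, hx, hy, hz]
  clear hJ ht hx hy hz


  have hsmul : ∀ i : ℕ, i • (X 2 : MvPolynomial (Fin 4) k) = C (i : k) * X 2 := by
    intro i
    rw [nsmul_eq_mul]
    norm_cast
  simp only [hsmul]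
  -- basic membership facts
  have hxI2 : (X 1 : MvPolynomial (Fin 4) k) ∈ Ideal.span {X 1, X 2} :=
    Ideal.subset_span (by simp)
  have hyI2 : (X 2 : MvPolynomial (Fin 4) k) ∈ Ideal.span {X 1, X 2} :=
    Ideal.subset_span (by simp)
  have hformI2 : ∀ i : ℕ, (X 1 + C (i : k) * X 2 : MvPolynomial (Fin 4) k) ∈
      Ideal.span {X 1, X 2} :=
    fun i => add_mem hxI2 (Ideal.mul_mem_left _ _ hyI2)
  have hI2M : (Ideal.span {X 1, X 2} : Ideal (MvPolynomial (Fin 4) k)) ≤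
      Ideal.span {X 1, X 2, X 3} :=
    Ideal.span_mono (by intro a ha; rcases ha with rfl | rfl <;> simp)
  have hzM : (X 3 : MvPolynomial (Fin 4) k) ∈ Ideal.span {X 1, X 2, X 3} :=
    Ideal.subset_span (by simp)
  have hcard : (Finset.Icc 1 (s - 3)).card = s - 3 := by rw [Nat.card_Icc]; omega
  have hprodmem : (∏ i ∈ Finset.Icc 1 (s - 3), (X 1 + C (i : k) * X 2)) ∈
      (Ideal.span {X 1, X 2} : Ideal (MvPolynomial (Fin 4) k)) ^ (s - 3) := by
    have h := prod_mem_pow (I := Ideal.span {X 1, X 2}) (Finset.Icc 1 (s - 3))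
      (fun i => X 1 + C (i : k) * X 2) (fun i _ => hformI2 i)
    rwa [hcard] at h
  have hPrmem : (X 1 * X 2 * ∏ i ∈ Finset.Icc 1 (s - 3), (X 1 + C (i : k) * X 2)) ∈
      (Ideal.span {X 1, X 2} : Ideal (MvPolynomial (Fin 4) k)) ^ (s - 1) := by
    have h1 : (X 1 * X 2 : MvPolynomial (Fin 4) k) ∈ (Ideal.span {X 1, X 2}) ^ 2 := by
      rw [sq]; exact Ideal.mul_mem_mul hxI2 hyI2
    have h2 := Ideal.mul_mem_mul h1 hprodmem
    rwa [← pow_add, show 2 + (s - 3) = s - 1 by omega] at h2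
  have hPrmem' : (X 1 * X 2 * ∏ i ∈ Finset.Icc 1 (s - 3), (X 1 + C (i : k) * X 2)) ∈
      (Ideal.span {X 1, X 2} : Ideal (MvPolynomial (Fin 4) k)) ^ (s - 2) :=
    Ideal.pow_le_pow_right (by omega) hPrmem
  have hPrM : (X 1 * X 2 * ∏ i ∈ Finset.Icc 1 (s - 3), (X 1 + C (i : k) * X 2)) ∈
      (Ideal.span {X 1, X 2, X 3} : Ideal (MvPolynomial (Fin 4) k)) ^ (s - 1) :=
    Ideal.pow_right_mono hI2M _ hPrmem
  have hdx : (X 1 : MvPolynomial (Fin 4) k) ∣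
      X 1 * X 2 * ∏ i ∈ Finset.Icc 1 (s - 3), (X 1 + C (i : k) * X 2) :=
    dvd_mul_of_dvd_left (dvd_mul_right _ _) _
  have hdy : (X 2 : MvPolynomial (Fin 4) k) ∣
      X 1 * X 2 * ∏ i ∈ Finset.Icc 1 (s - 3), (X 1 + C (i : k) * X 2) :=
    dvd_mul_of_dvd_left (dvd_mul_left _ _) _
  have hdform : ∀ i ∈ Finset.Icc 1 (s - 3), (X 1 + C (i : k) * X 2 : MvPolynomial (Fin 4) k) ∣
      X 1 * X 2 * ∏ i ∈ Finset.Icc 1 (s - 3), (X 1 + C (i : k) * X 2) :=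
    fun i hi => Dvd.dvd.mul_left (Finset.dvd_prod_of_mem _ hi) _
  have hPrspan : ∀ g : MvPolynomial (Fin 4) k,
      g ∣ X 1 * X 2 * ∏ i ∈ Finset.Icc 1 (s - 3), (X 1 + C (i : k) * X 2) →
      ∀ S : Ideal (MvPolynomial (Fin 4) k), g ∈ S →
      (X 1 * X 2 * ∏ i ∈ Finset.Icc 1 (s - 3), (X 1 + C (i : k) * X 2)) ∈ S := by
    rintro g ⟨w, hw⟩ S hg
    rw [hw]
    exact S.mul_mem_right w hg
  have hzzsq : ∀ g w : MvPolynomial (Fin 4) k,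
      (X 3 : MvPolynomial (Fin 4) k) * X 3 ∈ Ideal.span {g, w, X 3} ^ 2 := fun g w => by
    rw [sq]
    exact Ideal.mul_mem_mul (Ideal.subset_span (by simp)) (Ideal.subset_span (by simp))
  have hzzIa : (X 3 : MvPolynomial (Fin 4) k) * X 3 ∈
      (Ideal.span {X 1, X 2, X 3}) ^ (s - 1) + Ideal.span {(X 3 : MvPolynomial (Fin 4) k) ^ 2} :=
    Submodule.mem_sup_right (Ideal.mem_span_singleton'.mpr ⟨1, by ring⟩)
  have hsq : ∀ g : MvPolynomial (Fin 4) k,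
      g ∣ X 1 * X 2 * ∏ i ∈ Finset.Icc 1 (s - 3), (X 1 + C (i : k) * X 2) →
      (X 1 * X 2 * ∏ i ∈ Finset.Icc 1 (s - 3), (X 1 + C (i : k) * X 2)) * X 3 ∈
        Ideal.span {g, X 1 - X 2 - C l * X 0, X 3} ^ 2 := by
    intro g hg
    rw [sq]
    exact Ideal.mul_mem_mul (hPrspan g hg _ (Ideal.subset_span (by simp)))
      (Ideal.subset_span (by simp))
  refine le_antisymm ?_ ?_
  · -- hard direction : colon ≤ RHS
    intro f hf
    have hfz := Submodule.mem_colon.mp hf (X 3) (Ideal.mem_span_singleton_self _)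
    rw [smul_eq_mul] at hfz
    simp only [Submodule.mem_inf, Submodule.mem_iInf] at hfz
    obtain ⟨⟨⟨⟨⟨⟨⟨hc1, hc2⟩, hc3⟩, hc4⟩, hc5⟩, hc6⟩, hc7⟩, hc8⟩ := hfz
    clear hc1 hc2 hc3 hc5
    have hffz : ∀ K : Ideal (MvPolynomial (Fin 4) k), f * X 3 ∈ K →
        (X 3 : MvPolynomial (Fin 4) k) * X 3 ∈ K → phiz f * X 3 ∈ K := by
      intro K h1 h2
      obtain ⟨r, hr⟩ := Ideal.mem_span_singleton'.mp (sub_phiz_mem f)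
      have e : phiz f * X 3 = f * X 3 - r * (X 3 * X 3) := by
        linear_combination (X 3 : MvPolynomial (Fin 4) k) * hr
      rw [e]
      exact K.sub_mem h1 (K.mul_mem_left r h2)
    have hA : phiz f ∈ (Ideal.span {X 1, X 2} : Ideal (MvPolynomial (Fin 4) k)) ^ (s - 2) := by
      have h4' := hffz _ hc4 hzzIa
      rw [show s - 1 = s - 2 + 1 by omega] at h4'
      have h := Ia_deriv (s - 2) h4'
      rwa [D_mul_X3, phiz_phiz] at h
    have hx6 : phiz f ∈ Ideal.span {X 1, X 1 - X 2 - C l * X 0} := by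
      have h := square_deriv (phiz_X_ne 1 (by decide)) (pderiv_X_of_ne (by decide))
        (phiz_L l) (pderiv3_L l) (hffz _ hc6 (hzzsq _ _))
      rwa [D_mul_X3, phiz_phiz] at h
    have hy7 : phiz f ∈ Ideal.span {X 2, X 1 - X 2 - C l * X 0} := by
      have h := square_deriv (phiz_X_ne 2 (by decide)) (pderiv_X_of_ne (by decide))
        (phiz_L l) (pderiv3_L l) (hffz _ hc7 (hzzsq _ _))
      rwa [D_mul_X3, phiz_phiz] at h
    have h8' : ∀ i ∈ Finset.Icc 1 (s - 3),
        phiz f ∈ Ideal.span {X 1 + C (i : k) * X 2, X 1 - X 2 - C l * X 0} := by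
      intro i hi
      have h := square_deriv (phiz_form (i : k)) (pderiv3_form (i : k))
        (phiz_L l) (pderiv3_L l) (hffz _ (hc8 i hi) (hzzsq _ _))
      rwa [D_mul_X3, phiz_phiz] at h
    have hpsidvd : ∀ g : MvPolynomial (Fin 4) k, psil l g = g →
        phiz f ∈ Ideal.span {g, X 1 - X 2 - C l * X 0} → g ∣ psil l (phiz f) := by
      intro g hgfix hmem
      obtain ⟨a, b, hab⟩ := Ideal.mem_span_pair.mp hmem
      refine ⟨psil l a, ?_⟩
      rw [← hab, map_add, map_mul, map_mul, hgfix, psil_L l hl, mul_zero, add_zero, mul_comm]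
    have hpsiform : ∀ c : k, psil l (X 1 + C c * X 2 : MvPolynomial (Fin 4) k) =
        X 1 + C c * X 2 := fun c => by
      rw [map_add, map_mul, psil_C, psil_X_ne l 1 (by decide), psil_X_ne l 2 (by decide)]
    have hProdDvd := prod_forms_dvd (psil l (phiz f)) (Finset.Icc 1 (s - 3))
      (by simp) (hpsidvd _ (psil_X_ne l 1 (by decide)) hx6)
      (hpsidvd _ (psil_X_ne l 2 (by decide)) hy7)
      (fun i hi => hpsidvd _ (hpsiform (i : k)) (h8' i hi))
    obtain ⟨h', hh'⟩ := hProdDvd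
    obtain ⟨q, hq⟩ := Ideal.mem_span_singleton'.mp (sub_psil_mem l hl (phiz f))
    have hLqmem : q * (X 1 - X 2 - C l * X 0) ∈
        (Ideal.span {X 1, X 2} : Ideal (MvPolynomial (Fin 4) k)) ^ (s - 2) := by
      rw [show q * (X 1 - X 2 - C l * X 0) =
        phiz f - (X 1 * X 2 * ∏ i ∈ Finset.Icc 1 (s - 3), (X 1 + C (i : k) * X 2)) * h' by
          linear_combination hq - hh']
      exact Submodule.sub_mem _ hA (Ideal.mul_mem_right h' _ hPrmem')
    have hqmem : q ∈ (Ideal.span {X 1, X 2} : Ideal (MvPolynomial (Fin 4) k)) ^ (s - 2) := by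
      apply wIdeal_le
      intro d hd
      refine coeff_of_L_mul hl q (s - 2) ?_ d hd
      intro d' hd'
      have h := span_xy_pow_le (s - 2) hLqmem d' hd'
      rwa [mul_comm] at h
    have hfsplit : f = ((X 1 * X 2 * ∏ i ∈ Finset.Icc 1 (s - 3), (X 1 + C (i : k) * X 2)) * h'
        + q * (X 1 - X 2 - C l * X 0)) + (f - phiz f) := by
      linear_combination - hq + hh'
    rw [hfsplit]
    refine Submodule.add_mem _ (Submodule.mem_sup_left (Submodule.add_mem _ ?_ ?_))
      (Submodule.mem_sup_right (sub_phiz_mem f))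
    · exact Submodule.mem_sup_left (Ideal.mem_span_singleton'.mpr ⟨h', mul_comm _ _⟩)
    · exact Submodule.mem_sup_right
        (Ideal.mul_mem_mul hqmem (Ideal.mem_span_singleton_self _))
  · -- easy direction : RHS ≤ colon
    intro f hf
    rw [Submodule.mem_colon]
    intro p hp
    obtain ⟨c, rfl⟩ := Ideal.mem_span_singleton'.mp hp
    rw [smul_eq_mul, show f * (c * X 3) = c * (f * X 3) by ring]
    apply Ideal.mul_mem_left
    obtain ⟨ab, hab, czz, hcz, rfl⟩ := Submodule.mem_sup.mp hf
    obtain ⟨a, ha, b, hb, rfl⟩ := Submodule.mem_sup.mp hab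
    rw [show (a + b + czz) * X 3 = a * X 3 + b * X 3 + czz * X 3 by ring]
    refine add_mem (add_mem ?_ ?_) ?_
    · -- a ∈ span {Pr}
      obtain ⟨r, rfl⟩ := Ideal.mem_span_singleton'.mp ha
      simp only [Submodule.mem_inf, Submodule.mem_iInf]
      refine ⟨⟨⟨⟨⟨⟨⟨?_, ?_⟩, ?_⟩, ?_⟩, ?_⟩, ?_⟩, ?_⟩, ?_⟩
      · exact Ideal.mul_mem_left _ _ (Ideal.subset_span (by simp))
      · exact Ideal.mul_mem_left _ _ (Ideal.subset_span (by simp))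
      · intro i hi
        exact Ideal.mul_mem_left _ _ (Ideal.subset_span (by simp))
      · rw [mul_assoc]
        exact Ideal.mul_mem_left _ _
          (Submodule.mem_sup_left (Ideal.mul_mem_right _ _ hPrM))
      · exact Ideal.mul_mem_left _ _ (Ideal.subset_span (by simp))
      · rw [mul_assoc]
        exact Ideal.mul_mem_left _ _ (hsq _ hdx)
      · rw [mul_assoc]
        exact Ideal.mul_mem_left _ _ (hsq _ hdy)
      · intro i hi
        rw [mul_assoc]
        exact Ideal.mul_mem_left _ _ (hsq _ (hdform i hi))
    · -- b ∈ I2^(s-2) * span {L}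
      have hBz : b * X 3 ∈ (Ideal.span {X 1, X 2} : Ideal (MvPolynomial (Fin 4) k)) ^ (s - 2) *
          Ideal.span {X 1 - X 2 - C l * X 0} * Ideal.span {X 3} :=
        Ideal.mul_mem_mul hb (Ideal.mem_span_singleton_self _)
      have hBM : (Ideal.span {X 1, X 2} : Ideal (MvPolynomial (Fin 4) k)) ^ (s - 2) *
          Ideal.span {X 1 - X 2 - C l * X 0} * Ideal.span {X 3} ≤
          (Ideal.span {X 1, X 2, X 3}) ^ (s - 1) := by
        rw [mul_right_comm]
        refine le_trans Ideal.mul_le_left (le_trans (Ideal.mul_mono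
          (Ideal.pow_right_mono hI2M _)
          (by rw [Ideal.span_le, Set.singleton_subset_iff]; exact hzM)) ?_)
        rw [← pow_succ, show s - 2 + 1 = s - 1 by omega]
      have hBsq : ∀ g : MvPolynomial (Fin 4) k,
          (Ideal.span {X 1, X 2} : Ideal (MvPolynomial (Fin 4) k)) ^ (s - 2) *
          Ideal.span {X 1 - X 2 - C l * X 0} * Ideal.span {X 3} ≤
          Ideal.span {g, X 1 - X 2 - C l * X 0, X 3} ^ 2 := by
        intro g
        rw [mul_assoc]
        refine le_trans Ideal.mul_le_right ?_
        rw [Ideal.span_singleton_mul_span_singleton, Ideal.span_le, Set.singleton_subset_iff]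
        show (X 1 - X 2 - C l * X 0) * X 3 ∈ Ideal.span {g, X 1 - X 2 - C l * X 0, X 3} ^ 2
        rw [sq]
        exact Ideal.mul_mem_mul (Ideal.subset_span (by simp)) (Ideal.subset_span (by simp))
      simp only [Submodule.mem_inf, Submodule.mem_iInf]
      refine ⟨⟨⟨⟨⟨⟨⟨?_, ?_⟩, ?_⟩, ?_⟩, ?_⟩, ?_⟩, ?_⟩, ?_⟩
      · exact Ideal.mul_mem_left _ _ (Ideal.subset_span (by simp))
      · exact Ideal.mul_mem_left _ _ (Ideal.subset_span (by simp))
      · intro i hi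
        exact Ideal.mul_mem_left _ _ (Ideal.subset_span (by simp))
      · exact Submodule.mem_sup_left (hBM hBz)
      · exact Ideal.mul_mem_left _ _ (Ideal.subset_span (by simp))
      · exact hBsq _ hBz
      · exact hBsq _ hBz
      · intro i hi
        exact hBsq _ hBz
    · -- czz ∈ span {X 3}
      obtain ⟨r, rfl⟩ := Ideal.mem_span_singleton'.mp hcz
      simp only [Submodule.mem_inf, Submodule.mem_iInf]
      refine ⟨⟨⟨⟨⟨⟨⟨?_, ?_⟩, ?_⟩, ?_⟩, ?_⟩, ?_⟩, ?_⟩, ?_⟩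
      · exact Ideal.mul_mem_left _ _ (Ideal.subset_span (by simp))
      · exact Ideal.mul_mem_left _ _ (Ideal.subset_span (by simp))
      · intro i hi
        exact Ideal.mul_mem_left _ _ (Ideal.subset_span (by simp))
      · exact Submodule.mem_sup_right (Ideal.mem_span_singleton'.mpr ⟨r, by ring⟩)
      · exact Ideal.mul_mem_left _ _ (Ideal.subset_span (by simp))
      · rw [mul_assoc]
        exact Ideal.mul_mem_left _ _ (hzzsq _ _)
      · rw [mul_assoc]
        exact Ideal.mul_mem_left _ _ (hzzsq _ _)
      · intro i hi
        rw [mul_assoc]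
        exact Ideal.mul_mem_left _ _ (hzzsq _ _)
end
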